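/- Let F : ℝ^n → ℝ^n, let π ∈ ℝ^n, and let q ∈ [0,1) and c, φ ≥ 0 be such that ‖F(x) − π‖ ≤ q·‖x − π‖ for all x ∈ ℝ^n. Let (x_t)_{t ≥ 0} be a sequence in ℝ^n with ‖x₀ − π‖ ≤ φ and ‖x_t − F(x_{t−1})‖ ≤ c·q^t for every t ≥ 1. Then ‖x_t − π‖ ≤ q^t·(φ + t·c) for every t ≥ 0; in particular, x_t converges to π as t → ∞. -/

import Mathlib

open BigOperators Filter

/-- The Euclidean norm of a real vector. -/
noncomputable def euclNorm {p : Type*} [Fintype p] (v : p → ℝ) : ℝ :=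
  Real.sqrt (∑ i, v i ^ 2)

lemma euclNorm_eq {p : Type*} [Fintype p] (v : p → ℝ) :
    euclNorm v = ‖(WithLp.equiv 2 (p → ℝ)).symm v‖ := by
  rw [EuclideanSpace.norm_eq, euclNorm]
  congr 1
  apply Finset.sum_congr rfl
  intro i _
  rw [Real.norm_eq_abs, sq_abs]
  rfl

/-- If `‖F(x) - π‖ ≤ q‖x - π‖` for all `x` with `q ∈ [0,1)`, `c, φ ≥ 0`,
`‖x₀ - π‖ ≤ φ` and `‖x_t - F(x_{t-1})‖ ≤ c·q^t` for `t ≥ 1`, then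
`‖x_t - π‖ ≤ q^t(φ + t·c)` for all `t`; in particular `x_t → π`. -/
theorem stmt_17 {n : ℕ} (F : (Fin n → ℝ) → (Fin n → ℝ)) (piv : Fin n → ℝ)
    (q c φ : ℝ) (hq0 : 0 ≤ q) (hq1 : q < 1) (hc : 0 ≤ c) (hφ : 0 ≤ φ)
    (hF : ∀ x, euclNorm (F x - piv) ≤ q * euclNorm (x - piv))
    (x : ℕ → Fin n → ℝ)
    (hx0 : euclNorm (x 0 - piv) ≤ φ)
    (hxt : ∀ t : ℕ, 1 ≤ t → euclNorm (x t - F (x (t - 1))) ≤ c * q ^ t) :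
    (∀ t : ℕ, euclNorm (x t - piv) ≤ q ^ t * (φ + t * c)) ∧
      Tendsto x atTop (nhds piv) := by
  have key : ∀ t : ℕ, euclNorm (x t - piv) ≤ q ^ t * (φ + t * c) := by
    intro t
    induction t with
    | zero => simpa using hx0
    | succ k ih =>
      have h1 : euclNorm (x (k + 1) - piv) ≤
          euclNorm (x (k + 1) - F (x k)) + euclNorm (F (x k) - piv) := by
        rw [euclNorm_eq, euclNorm_eq, euclNorm_eq]
        have : (WithLp.equiv 2 (Fin n → ℝ)).symm (x (k + 1) - piv) =
            (WithLp.equiv 2 (Fin n → ℝ)).symm (x (k + 1) - F (x k)) +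
            (WithLp.equiv 2 (Fin n → ℝ)).symm (F (x k) - piv) := by
          rw [WithLp.equiv_symm_apply, ← WithLp.toLp_add, sub_add_sub_cancel]
        rw [this]
        exact norm_add_le _ _
      have h2 := hxt (k + 1) (Nat.le_add_left 1 k)
      simp only [Nat.add_sub_cancel] at h2
      have h3 : euclNorm (F (x k) - piv) ≤ q * (q ^ k * (φ + k * c)) :=
        (hF (x k)).trans (by
          apply mul_le_mul_of_nonneg_left ih hq0)
      calc euclNorm (x (k + 1) - piv) ≤ c * q ^ (k + 1) + q * (q ^ k * (φ + k * c)) :=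
            h1.trans (add_le_add h2 h3)
        _ = q ^ (k + 1) * (φ + ((k : ℝ) + 1) * c) := by ring
        _ = q ^ (k + 1) * (φ + ((k + 1 : ℕ) : ℝ) * c) := by push_cast; ring
  refine ⟨key, ?_⟩
  have hnorm : Tendsto (fun t => euclNorm (x t - piv)) atTop (nhds 0) := by
    have hub : Tendsto (fun t : ℕ => q ^ t * (φ + t * c)) atTop (nhds 0) := by
      have h1 : Tendsto (fun t : ℕ => φ * q ^ t + c * (t * q ^ t)) atTop (nhds 0) := by
        have := (tendsto_pow_atTop_nhds_zero_of_lt_one hq0 hq1).const_mul φ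
        have h2 := (tendsto_self_mul_const_pow_of_lt_one hq0 hq1).const_mul c
        simpa using this.add h2
      convert h1 using 2 with t
      push_cast
      ring
    have hlb : Tendsto (fun _ : ℕ => (0 : ℝ)) atTop (nhds 0) := tendsto_const_nhds
    refine tendsto_of_tendsto_of_tendsto_of_le_of_le hlb hub (fun t => ?_) key
    exact Real.sqrt_nonneg _
  have heq : Tendsto (fun t => (WithLp.equiv 2 (Fin n → ℝ)).symm (x t))
      atTop (nhds ((WithLp.equiv 2 (Fin n → ℝ)).symm piv)) := by
    rw [tendsto_iff_norm_sub_tendsto_zero]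
    convert hnorm using 2 with t
    rw [euclNorm_eq, WithLp.equiv_symm_apply, WithLp.toLp_sub]
  have hcont : Continuous (WithLp.equiv 2 (Fin n → ℝ)) :=
    (WithLp.linearEquiv 2 ℝ (Fin n → ℝ)).toContinuousLinearEquiv.continuous
  have := (hcont.tendsto _).comp heq
  simpa [Function.comp_def] using this
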